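/- Let p ≥ 3 be an integer. If the polynomial t^p − t + 1 is irreducible over ℚ, then the polynomial f(t) = x·t^p + (x³ − x − 1)·t + 1, regarded as a polynomial in t with coefficients in the field ℚ(x) of rational functions, is irreducible over ℚ(x). -/
import Mathlib

open Polynomial

/-- The bivariate polynomial over `ℚ[x]`. -/
noncomputable def Fpoly (p : ℕ) : Polynomial (Polynomial ℚ) :=
  C X * X ^ p + C (X ^ 3 - X - 1) * X + 1

lemma Fpoly_coeff_zero (p : ℕ) (hp : 3 ≤ p) : (Fpoly p).coeff 0 = 1 := by
  have hp0 : p ≠ 0 := by omega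
  simp only [Fpoly, coeff_add, coeff_C_mul, coeff_X_pow, coeff_one, coeff_X]
  simp [hp0, Ne.symm hp0]

lemma Fpoly_coeff_top (p : ℕ) (hp : 3 ≤ p) : (Fpoly p).coeff p = X := by
  have hp0 : p ≠ 0 := by omega
  have hp1 : p ≠ 1 := by omega
  simp only [Fpoly, coeff_add, coeff_C_mul, coeff_X_pow, coeff_one, coeff_X]
  simp [hp0, hp1, Ne.symm hp0, Ne.symm hp1]

lemma Fpoly_primitive (p : ℕ) (hp : 3 ≤ p) : (Fpoly p).IsPrimitive := by
  intro r hr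
  have := (C_dvd_iff_dvd_coeff r (Fpoly p)).mp hr 0
  rw [Fpoly_coeff_zero p hp] at this
  exact isUnit_of_dvd_one this

lemma Fpoly_natDegree_le (p : ℕ) (hp : 3 ≤ p) : (Fpoly p).natDegree ≤ p := by
  unfold Fpoly
  apply le_trans (natDegree_add_le _ _)
  simp only [max_le_iff]
  constructor
  · apply le_trans (natDegree_add_le _ _)
    simp only [max_le_iff]
    constructor
    · exact le_trans (natDegree_C_mul_le _ _) (by rw [natDegree_X_pow])
    · exact le_trans (natDegree_C_mul_le _ _) (by rw [natDegree_X]; omega)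
  · simp

lemma Fpoly_natDegree (p : ℕ) (hp : 3 ≤ p) : (Fpoly p).natDegree = p := by
  have h1 : (Fpoly p).coeff p ≠ 0 := by rw [Fpoly_coeff_top p hp]; exact X_ne_zero
  exact le_antisymm (Fpoly_natDegree_le p hp) (le_natDegree_of_ne_zero h1)

lemma Fpoly_ne_zero (p : ℕ) (hp : 3 ≤ p) : Fpoly p ≠ 0 := by
  intro h0
  have := Fpoly_coeff_top p hp
  rw [h0] at this
  simp at this
  exact X_ne_zero this.symm

lemma target_natDegree (p : ℕ) (hp : 3 ≤ p) :
    (X ^ p - X + 1 : Polynomial ℚ).natDegree = p := by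
  have hp0 : p ≠ 0 := by omega
  have hp1 : p ≠ 1 := by omega
  have hc : (X ^ p - X + 1 : Polynomial ℚ).coeff p = 1 := by
    simp [coeff_X_pow, coeff_one, coeff_X, hp0, hp1, Ne.symm hp0, Ne.symm hp1]
  have hle : (X ^ p - X + 1 : Polynomial ℚ).natDegree ≤ p := by
    apply le_trans (natDegree_add_le _ _)
    simp only [max_le_iff]
    refine ⟨le_trans (natDegree_sub_le _ _) ?_, by simp⟩
    simp only [max_le_iff, natDegree_X_pow, natDegree_X]
    omega
  exact le_antisymm hle (le_natDegree_of_ne_zero (by rw [hc]; norm_num))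

/-- Specialization `x ↦ 1` sends `Fpoly p` to `X^p - X + 1`. -/
lemma Fpoly_map (p : ℕ) :
    (Fpoly p).map (Polynomial.evalRingHom (1 : ℚ)) = X ^ p - X + 1 := by
  simp [Fpoly, Polynomial.map_add, Polynomial.map_mul, Polynomial.map_pow,
    Polynomial.map_one, map_C, map_X]
  ring

lemma Fpoly_irreducible (p : ℕ) (hp : 3 ≤ p)
    (h : Irreducible (X ^ p - X + 1 : Polynomial ℚ)) :
    Irreducible (Fpoly p) := by
  have hp0 : p ≠ 0 := by omega
  have hF0 : Fpoly p ≠ 0 := Fpoly_ne_zero p hp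
  constructor
  · intro hu
    have := natDegree_eq_zero_of_isUnit hu
    rw [Fpoly_natDegree p hp] at this
    exact hp0 this
  · intro a b hab
    have ha0 : a ≠ 0 := fun h0 => hF0 (by rw [hab, h0, zero_mul])
    have hb0 : b ≠ 0 := fun h0 => hF0 (by rw [hab, h0, mul_zero])
    set φ := Polynomial.evalRingHom (1 : ℚ) with hφ
    have hmul : (a.map φ) * (b.map φ) = X ^ p - X + 1 := by
      rw [← Polynomial.map_mul, ← hab, Fpoly_map]
    have hmapne : (X ^ p - X + 1 : Polynomial ℚ) ≠ 0 := h.ne_zero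
    have ha0' : a.map φ ≠ 0 := fun h0 => hmapne (by rw [← hmul, h0, zero_mul])
    have hb0' : b.map φ ≠ 0 := fun h0 => hmapne (by rw [← hmul, h0, mul_zero])
    have hdegsum : a.natDegree + b.natDegree = p := by
      rw [← natDegree_mul ha0 hb0, ← hab, Fpoly_natDegree p hp]
    have hdegsum' : (a.map φ).natDegree + (b.map φ).natDegree = p := by
      rw [← natDegree_mul ha0' hb0', hmul, target_natDegree p hp]
    have hda : (a.map φ).natDegree ≤ a.natDegree := natDegree_map_le
    have hdb : (b.map φ).natDegree ≤ b.natDegree := natDegree_map_le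
    have key : ∀ c : Polynomial (Polynomial ℚ), c ≠ 0 → c.natDegree = 0 →
        c ∣ Fpoly p → IsUnit c := by
      intro c _ hcd hdvd
      obtain ⟨r, hr⟩ := natDegree_eq_zero.mp hcd
      have : IsUnit r := Fpoly_primitive p hp r (by rwa [hr])
      rw [← hr]
      exact isUnit_C.mpr this
    rcases h.isUnit_or_isUnit hmul.symm with hu | hu
    · left
      have : (a.map φ).natDegree = 0 := natDegree_eq_zero_of_isUnit hu
      have hda0 : a.natDegree = 0 := by omega
      exact key a ha0 hda0 ⟨b, hab⟩
    · right
      have : (b.map φ).natDegree = 0 := natDegree_eq_zero_of_isUnit hu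
      have hdb0 : b.natDegree = 0 := by omega
      exact key b hb0 hdb0 ⟨a, by rw [hab, mul_comm]⟩

lemma Fpoly_map_ratfunc (p : ℕ) :
    (Fpoly p).map (algebraMap (Polynomial ℚ) (RatFunc ℚ)) =
      (C (RatFunc.X : RatFunc ℚ) * X ^ p +
        C ((RatFunc.X : RatFunc ℚ) ^ 3 - RatFunc.X - 1) * X + 1) := by
  simp [Fpoly, Polynomial.map_add, Polynomial.map_mul, Polynomial.map_pow,
    Polynomial.map_one, map_C, map_X, map_sub, map_pow, RatFunc.algebraMap_X]

/-- If `t^p − t + 1` is irreducible over `ℚ`, then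
`f(t) = x t^p + (x³ − x − 1) t + 1` is irreducible over the field `ℚ(x)` of
rational functions. -/
theorem stmt11 (p : ℕ) (hp : 3 ≤ p)
    (h : Irreducible (Polynomial.X ^ p - Polynomial.X + 1 : Polynomial ℚ)) :
    Irreducible
      (Polynomial.C (RatFunc.X : RatFunc ℚ) * Polynomial.X ^ p +
        Polynomial.C ((RatFunc.X : RatFunc ℚ) ^ 3 - RatFunc.X - 1) * Polynomial.X + 1 :
        Polynomial (RatFunc ℚ)) := by
  rw [← Fpoly_map_ratfunc p]
  exact ((Fpoly_primitive p hp).irreducible_iff_irreducible_map_fraction_map).mp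
    (Fpoly_irreducible p hp h)
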